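/- arXiv:1701.07947 — 5 statements merged into one kernel-verified Lean document; each statement's English description precedes it below -/
import Mathlib

section
/- If Δ ≠ 0, then the polynomials φ(x) = x⁴ − b₄x² − 2b₆x − b₈ and ψ(x) = 4x³ + b₂x² + 2b₄x + b₆ are coprime in K[x]; equivalently, the homogeneous map F(z,w) = (z⁴ − b₄z²w² − 2b₆zw³ − b₈w⁴, 4z³w + b₂z²w² + 2b₄zw³ + b₆w⁴) has no common zero other than (0,0) in L² for any field extension L of K. -/
open Polynomial

private lemma bezout_key {K : Type*} [Field K] [CharZero K] (W : WeierstrassCurve K) :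
    (C (8 * W.b₂ ^ 3 * W.b₆ + (-8) * W.b₂ ^ 2 * W.b₄ ^ 2 + 16 * W.b₂ ^ 2 * W.b₈ +
          (-336) * W.b₂ * W.b₄ * W.b₆ + 288 * W.b₄ ^ 3 + (-384) * W.b₄ * W.b₈ +
          1296 * W.b₆ ^ 2) * X ^ 2 +
        C (2 * W.b₂ ^ 4 * W.b₆ + (-2) * W.b₂ ^ 3 * W.b₄ ^ 2 + (-80) * W.b₂ ^ 2 * W.b₄ * W.b₆ +
          72 * W.b₂ * W.b₄ ^ 3 + 32 * W.b₂ * W.b₄ * W.b₈ + 360 * W.b₂ * W.b₆ ^ 2 +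
          (-144) * W.b₄ ^ 2 * W.b₆ + (-576) * W.b₆ * W.b₈) * X +
        C ((-1) * W.b₂ ^ 4 * W.b₈ + 5 * W.b₂ ^ 3 * W.b₄ * W.b₆ + (-4) * W.b₂ ^ 2 * W.b₄ ^ 3 +
          48 * W.b₂ ^ 2 * W.b₄ * W.b₈ + W.b₂ ^ 2 * W.b₆ ^ 2 + (-204) * W.b₂ * W.b₄ ^ 2 * W.b₆ +
          (-176) * W.b₂ * W.b₆ * W.b₈ + 144 * W.b₄ ^ 4 + (-384) * W.b₄ ^ 2 * W.b₈ +
          864 * W.b₄ * W.b₆ ^ 2 + 256 * W.b₈ ^ 2)) *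
      (X ^ 4 - C W.b₄ * X ^ 2 - C (2 * W.b₆) * X - C W.b₈ : K[X]) +
    (C ((-2) * W.b₂ ^ 3 * W.b₆ + 2 * W.b₂ ^ 2 * W.b₄ ^ 2 + (-4) * W.b₂ ^ 2 * W.b₈ +
          84 * W.b₂ * W.b₄ * W.b₆ + (-72) * W.b₄ ^ 3 + 96 * W.b₄ * W.b₈ +
          (-324) * W.b₆ ^ 2) * X ^ 3 +
        C (W.b₂ ^ 3 * W.b₈ + (-1) * W.b₂ ^ 2 * W.b₄ * W.b₆ + (-32) * W.b₂ * W.b₄ * W.b₈ +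
          (-9) * W.b₂ * W.b₆ ^ 2 + 36 * W.b₄ ^ 2 * W.b₆ + 144 * W.b₆ * W.b₈) * X ^ 2 +
        C (2 * W.b₂ ^ 3 * W.b₄ * W.b₆ + (-2) * W.b₂ ^ 2 * W.b₄ ^ 3 + 2 * W.b₂ ^ 2 * W.b₄ * W.b₈ +
          2 * W.b₂ ^ 2 * W.b₆ ^ 2 + (-84) * W.b₂ * W.b₄ ^ 2 * W.b₆ + 8 * W.b₂ * W.b₆ * W.b₈ +
          72 * W.b₄ ^ 4 + (-48) * W.b₄ ^ 2 * W.b₈ + 270 * W.b₄ * W.b₆ ^ 2 +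
          (-64) * W.b₈ ^ 2) * X +
        C ((-1) * W.b₂ ^ 3 * W.b₄ * W.b₈ + 4 * W.b₂ ^ 3 * W.b₆ ^ 2 +
          (-3) * W.b₂ ^ 2 * W.b₄ ^ 2 * W.b₆ + 7 * W.b₂ ^ 2 * W.b₆ * W.b₈ +
          36 * W.b₂ * W.b₄ ^ 2 * W.b₈ + (-162) * W.b₂ * W.b₄ * W.b₆ ^ 2 + 16 * W.b₂ * W.b₈ ^ 2 +
          108 * W.b₄ ^ 3 * W.b₆ + (-432) * W.b₄ * W.b₆ * W.b₈ + 729 * W.b₆ ^ 3)) *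
      (C 4 * X ^ 3 + C W.b₂ * X ^ 2 + C (2 * W.b₄) * X + C W.b₆ : K[X]) =
    C (W.Δ ^ 2) := by
  simp only [WeierstrassCurve.Δ, WeierstrassCurve.b₂, WeierstrassCurve.b₄,
    WeierstrassCurve.b₆, WeierstrassCurve.b₈, map_add, map_mul, map_sub, map_neg, map_pow,
    map_ofNat, map_one]
  ring

/-- If `Δ ≠ 0`, then `φ(x) = x⁴ − b₄x² − 2b₆x − b₈` and `ψ(x) = 4x³ + b₂x² + 2b₄x + b₆`
are coprime in `K[x]`; equivalently, the homogeneous map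
`F(z,w) = (z⁴ − b₄z²w² − 2b₆zw³ − b₈w⁴, 4z³w + b₂z²w² + 2b₄zw³ + b₆w⁴)` has no common zero
other than `(0,0)` in `L²` for any field extension `L` of `K`. -/
theorem phi_psi_coprime {K : Type*} [Field K] [CharZero K] (W : WeierstrassCurve K)
    (hΔ : W.Δ ≠ 0) :
    IsCoprime (X ^ 4 - C W.b₄ * X ^ 2 - C (2 * W.b₆) * X - C W.b₈ : K[X])
        (C 4 * X ^ 3 + C W.b₂ * X ^ 2 + C (2 * W.b₄) * X + C W.b₆ : K[X]) ∧
      ∀ (L : Type*) [Field L] [Algebra K L] (z w : L),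
        z ^ 4 - algebraMap K L W.b₄ * z ^ 2 * w ^ 2 - algebraMap K L (2 * W.b₆) * z * w ^ 3 -
              algebraMap K L W.b₈ * w ^ 4 = 0 →
          4 * z ^ 3 * w + algebraMap K L W.b₂ * z ^ 2 * w ^ 2 +
              algebraMap K L (2 * W.b₄) * z * w ^ 3 + algebraMap K L W.b₆ * w ^ 4 = 0 →
            z = 0 ∧ w = 0 := by
  have hD2 : W.Δ ^ 2 ≠ 0 := pow_ne_zero _ hΔ
  have key := bezout_key W
  have mk : ∀ u v φ ψ : K[X], u * φ + v * ψ = C (W.Δ ^ 2) → IsCoprime φ ψ := by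
    intro u v φ ψ h
    refine ⟨C (W.Δ ^ 2)⁻¹ * u, C (W.Δ ^ 2)⁻¹ * v, ?_⟩
    rw [mul_assoc, mul_assoc, ← mul_add, h, ← C_mul, inv_mul_cancel₀ hD2, C_1]
  have hcop : IsCoprime (X ^ 4 - C W.b₄ * X ^ 2 - C (2 * W.b₆) * X - C W.b₈ : K[X])
      (C 4 * X ^ 3 + C W.b₂ * X ^ 2 + C (2 * W.b₄) * X + C W.b₆ : K[X]) :=
    mk _ _ _ _ key
  refine ⟨hcop, fun L _ _ z w h1 h2 => ?_⟩
  by_cases hw : w = 0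
  · subst hw
    have hz : z ^ 4 = 0 := by linear_combination h1
    exact ⟨pow_eq_zero_iff (by norm_num) |>.mp hz, rfl⟩
  · exfalso
    have hcopL := hcop.map (mapRingHom (algebraMap K L))
    simp only [coe_mapRingHom, Polynomial.map_add, Polynomial.map_sub, Polynomial.map_mul,
      Polynomial.map_pow, map_X, map_C, Polynomial.map_ofNat] at hcopL
    obtain ⟨a, b, hab⟩ := hcopL
    have hev := congrArg (Polynomial.eval (z / w)) hab
    simp only [eval_add, eval_mul, eval_sub, eval_pow, eval_C, eval_X, eval_one,
      eval_ofNat, map_ofNat] at hev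
    have hphi : (z / w) ^ 4 - algebraMap K L W.b₄ * (z / w) ^ 2 -
        algebraMap K L (2 * W.b₆) * (z / w) - algebraMap K L W.b₈ = 0 := by
      have e : (z / w) ^ 4 - algebraMap K L W.b₄ * (z / w) ^ 2 -
          algebraMap K L (2 * W.b₆) * (z / w) - algebraMap K L W.b₈ =
          (z ^ 4 - algebraMap K L W.b₄ * z ^ 2 * w ^ 2 -
            algebraMap K L (2 * W.b₆) * z * w ^ 3 -
            algebraMap K L W.b₈ * w ^ 4) / w ^ 4 := by
        field_simp
      rw [e, h1, zero_div]
    have hpsi : 4 * (z / w) ^ 3 + algebraMap K L W.b₂ * (z / w) ^ 2 +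
        algebraMap K L (2 * W.b₄) * (z / w) + algebraMap K L W.b₆ = 0 := by
      have e : 4 * (z / w) ^ 3 + algebraMap K L W.b₂ * (z / w) ^ 2 +
          algebraMap K L (2 * W.b₄) * (z / w) + algebraMap K L W.b₆ =
          (4 * z ^ 3 * w + algebraMap K L W.b₂ * z ^ 2 * w ^ 2 +
            algebraMap K L (2 * W.b₄) * z * w ^ 3 +
            algebraMap K L W.b₆ * w ^ 4) / w ^ 4 := by
        field_simp
      rw [e, h2, zero_div]
    rw [hphi, hpsi, mul_zero, mul_zero, add_zero] at hev
    exact one_ne_zero hev.symm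
end

section
/- For every (z,w) ∈ ℂ² ∖ {(0,0)}, the limit G_F(z,w) = lim_{n→∞} 4^{−n} log ‖Fⁿ(z,w)‖ exists; moreover the convergence is uniform on ℂ² ∖ {(0,0)}, and there is a constant C ≥ 0 such that |G_F(z,w) − log ‖(z,w)‖| ≤ C for all (z,w) ≠ (0,0). -/
open MvPolynomial Filter

/-- The map `ℂ² → ℂ²` obtained by evaluating the pair of two-variable polynomials `(P, Q)`. -/
noncomputable def liftMap (P Q : MvPolynomial (Fin 2) ℂ) : ℂ × ℂ → ℂ × ℂ :=
  fun X => (eval ![X.1, X.2] P, eval ![X.1, X.2] Q)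

lemma eval_mul_pow_aux {n : ℕ} {φ : MvPolynomial (Fin 2) ℂ} (hφ : φ.IsHomogeneous n)
    (c : ℂ) (x : Fin 2 → ℂ) :
    eval (fun i => c * x i) φ = c ^ n * eval x φ := by
  rw [eval_eq, eval_eq, Finset.mul_sum]
  refine Finset.sum_congr rfl fun d hd => ?_
  have hdeg : d.degree = n := by
    by_contra h
    exact mem_support_iff.mp hd (hφ.coeff_eq_zero h)
  calc φ.coeff d * ∏ i ∈ d.support, (c * x i) ^ d i
      = φ.coeff d * ((∏ i ∈ d.support, c ^ d i) * ∏ i ∈ d.support, x i ^ d i) := by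
        rw [← Finset.prod_mul_distrib]; simp [mul_pow]
    _ = c ^ n * (φ.coeff d * ∏ i ∈ d.support, x i ^ d i) := by
        rw [Finset.prod_pow_eq_pow_sum, ← hdeg, Finsupp.degree_apply]; ring

/-- A sequence whose consecutive differences decay like `K/4^(n+1)` converges, with
explicit geometric control of the error. -/
lemma aux_seq (u : ℕ → ℝ) (K : ℝ) (_hK : 0 ≤ K)
    (h : ∀ n, |u (n + 1) - u n| ≤ K * (1 / 4) ^ (n + 1)) :
    ∃ L : ℝ, Tendsto u atTop (nhds L) ∧ ∀ n, |L - u n| ≤ K / 3 * (1 / 4) ^ n := by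
  set d : ℕ → ℝ := fun n => u (n + 1) - u n with hd
  have hgsum : Summable (fun n : ℕ => K * (1 / 4 : ℝ) ^ (n + 1)) := by
    have h1 : Summable (fun n : ℕ => (K * (1 / 4)) * (1 / 4 : ℝ) ^ n) :=
      (summable_geometric_of_lt_one (by norm_num) (by norm_num)).mul_left _
    refine h1.congr fun n => ?_
    ring
  have hsum : Summable d :=
    Summable.of_norm_bounded hgsum fun n => by simpa using h n
  refine ⟨u 0 + ∑' n, d n, ?_, ?_⟩
  · have hpartial : Tendsto (fun n => ∑ k ∈ Finset.range n, d k) atTop (nhds (∑' n, d n)) :=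
      hsum.hasSum.tendsto_sum_nat
    have := (tendsto_const_nhds (x := u 0)).add hpartial
    refine this.congr fun n => ?_
    rw [Finset.sum_range_sub (f := u)]
    ring
  · intro n
    have hshift : Summable (fun k => d (k + n)) :=
      (summable_nat_add_iff (f := d) n).mpr hsum
    have hkey : u 0 + ∑' m, d m - u n = ∑' k, d (k + n) := by
      have := Summable.sum_add_tsum_nat_add n hsum
      have hsumr : ∑ k ∈ Finset.range n, d k = u n - u 0 := Finset.sum_range_sub u n
      linarith [this]
    rw [hkey]
    have hbound : ∀ k, |d (k + n)| ≤ K * (1 / 4 : ℝ) ^ (k + n + 1) := fun k => by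
      simpa using h (k + n)
    have hshifta : Summable (fun k => |d (k + n)|) := hshift.abs
    have hgshift : Summable (fun k : ℕ => K * (1 / 4 : ℝ) ^ (k + n + 1)) :=
      (summable_nat_add_iff (f := fun j : ℕ => K * (1 / 4 : ℝ) ^ (j + 1)) n).mpr hgsum
    calc |∑' k, d (k + n)| ≤ ∑' k, |d (k + n)| := by
          have := norm_tsum_le_tsum_norm (f := fun k => d (k + n))
            (by simpa [Real.norm_eq_abs] using hshifta)
          simpa [Real.norm_eq_abs] using this
      _ ≤ ∑' k, K * (1 / 4 : ℝ) ^ (k + n + 1) :=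
          Summable.tsum_le_tsum hbound hshifta hgshift
      _ = ∑' k : ℕ, (K * (1 / 4 : ℝ) ^ (n + 1)) * (1 / 4 : ℝ) ^ k :=
          tsum_congr fun k => by rw [pow_add, pow_add]; ring
      _ = (K * (1 / 4) ^ (n + 1)) * ∑' k : ℕ, (1 / 4 : ℝ) ^ k := tsum_mul_left
      _ = K / 3 * (1 / 4) ^ n := by
          rw [tsum_geometric_of_lt_one (by norm_num) (by norm_num), pow_succ]
          norm_num
          ring

/-- For `F = (F₁, F₂)` with `F₁, F₂` homogeneous polynomials of degree 4 on `ℂ²` whose only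
common zero is `(0,0)`: for every `(z,w) ≠ (0,0)` the limit
`G_F(z,w) = lim_{n→∞} 4^{−n} log ‖Fⁿ(z,w)‖` exists; the convergence is uniform on
`ℂ² ∖ {(0,0)}`; and there is `C ≥ 0` with `|G_F(z,w) − log ‖(z,w)‖| ≤ C` for all
`(z,w) ≠ (0,0)`.  Here `‖(z,w)‖ = max (|z|, |w|)`. -/
theorem escape_rate_exists (P Q : MvPolynomial (Fin 2) ℂ)
    (hP : P.IsHomogeneous 4) (hQ : Q.IsHomogeneous 4)
    (hzero : ∀ X : ℂ × ℂ, liftMap P Q X = 0 → X = 0) :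
    ∃ G : ℂ × ℂ → ℝ,
      (∀ X : ℂ × ℂ, X ≠ 0 →
        Tendsto (fun n : ℕ => Real.log ‖(liftMap P Q)^[n] X‖ / 4 ^ n) atTop (nhds (G X))) ∧
      TendstoUniformlyOn (fun (n : ℕ) (X : ℂ × ℂ) => Real.log ‖(liftMap P Q)^[n] X‖ / 4 ^ n)
        G atTop {X : ℂ × ℂ | X ≠ 0} ∧
      ∃ C : ℝ, 0 ≤ C ∧ ∀ X : ℂ × ℂ, X ≠ 0 → |G X - Real.log ‖X‖| ≤ C := by
  set F : ℂ × ℂ → ℂ × ℂ := liftMap P Q with hFdef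
  -- homogeneity of F
  have hFsmul : ∀ (c : ℂ) (X : ℂ × ℂ), F (c • X) = c ^ 4 • F X := by
    intro c X
    have h1 : ![(c • X).1, (c • X).2] = fun i => c * ![X.1, X.2] i := by
      funext i
      fin_cases i <;> simp
    show (eval ![(c • X).1, (c • X).2] P, eval ![(c • X).1, (c • X).2] Q) = _
    rw [h1, eval_mul_pow_aux hP, eval_mul_pow_aux hQ]
    simp [hFdef, liftMap, Prod.smul_def, smul_eq_mul]
  have hFnorm : ∀ (c : ℂ) (X : ℂ × ℂ), ‖F (c • X)‖ = ‖c‖ ^ 4 * ‖F X‖ := by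
    intro c X
    rw [hFsmul, norm_smul, norm_pow]
  -- continuity of F
  have hcont : Continuous F := by
    have h : Continuous fun X : ℂ × ℂ => ![X.1, X.2] := by
      refine continuous_pi fun i => ?_
      fin_cases i
      · simpa using continuous_fst
      · simpa using continuous_snd
    exact ((MvPolynomial.continuous_eval P).comp h).prodMk
      ((MvPolynomial.continuous_eval Q).comp h)
  -- min and max on the unit sphere
  have hsphne : (Metric.sphere (0 : ℂ × ℂ) 1).Nonempty := by
    refine ⟨((1 : ℂ), (0 : ℂ)), ?_⟩
    rw [mem_sphere_zero_iff_norm]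
    simp [Prod.norm_def]
  obtain ⟨Y₁, hY₁, hminOn⟩ := (isCompact_sphere (0 : ℂ × ℂ) 1).exists_isMinOn hsphne
    (continuous_norm.comp hcont).continuousOn
  obtain ⟨Y₂, hY₂, hmaxOn⟩ := (isCompact_sphere (0 : ℂ × ℂ) 1).exists_isMaxOn hsphne
    (continuous_norm.comp hcont).continuousOn
  have hmin := isMinOn_iff.mp hminOn
  have hmax := isMaxOn_iff.mp hmaxOn
  set m : ℝ := ‖F Y₁‖ with hmdef
  set M : ℝ := ‖F Y₂‖ with hMdef
  have hY₁norm : ‖Y₁‖ = 1 := mem_sphere_zero_iff_norm.mp hY₁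
  have hY₁ne : Y₁ ≠ 0 := fun h => by simp [h] at hY₁norm
  have hm : 0 < m := by
    rw [hmdef, norm_pos_iff]
    exact fun h => hY₁ne (hzero Y₁ h)
  have hmM : m ≤ M := hmin Y₂ hY₂
  have hM : 0 < M := lt_of_lt_of_le hm hmM
  -- basic bounds
  have hbound : ∀ X : ℂ × ℂ, X ≠ 0 → m * ‖X‖ ^ 4 ≤ ‖F X‖ ∧ ‖F X‖ ≤ M * ‖X‖ ^ 4 := by
    intro X hX
    have hXpos : 0 < ‖X‖ := norm_pos_iff.mpr hX
    set c : ℂ := (‖X‖ : ℂ) with hc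
    have hcne : c ≠ 0 := by
      simp [hc, Complex.ofReal_ne_zero, ne_of_gt hXpos]
    have hcnorm : ‖c‖ = ‖X‖ := by
      rw [hc, Complex.norm_real, Real.norm_eq_abs, abs_of_pos hXpos]
    set Y : ℂ × ℂ := c⁻¹ • X with hY
    have hYnorm : ‖Y‖ = 1 := by
      rw [hY, norm_smul, norm_inv, hcnorm, inv_mul_cancel₀ (ne_of_gt hXpos)]
    have hXY : X = c • Y := by
      rw [hY, smul_inv_smul₀ hcne]
    have hFX : ‖F X‖ = ‖X‖ ^ 4 * ‖F Y‖ := by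
      conv_lhs => rw [hXY]
      rw [hFnorm, hcnorm]
    have hYsph : Y ∈ Metric.sphere (0 : ℂ × ℂ) 1 := mem_sphere_zero_iff_norm.mpr hYnorm
    have h1 : m ≤ ‖F Y‖ := hmin Y hYsph
    have h2 : ‖F Y‖ ≤ M := hmax Y hYsph
    have hp4 : (0 : ℝ) < ‖X‖ ^ 4 := by positivity
    constructor
    · rw [hFX]; nlinarith
    · rw [hFX]; nlinarith
  set K : ℝ := max |Real.log m| |Real.log M| with hKdef
  have hK0 : 0 ≤ K := le_trans (abs_nonneg _) (le_max_left _ _)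
  have hFne : ∀ X : ℂ × ℂ, X ≠ 0 → F X ≠ 0 := fun X hX h => hX (hzero X h)
  -- log estimate
  have hlog : ∀ X : ℂ × ℂ, X ≠ 0 → |Real.log ‖F X‖ - 4 * Real.log ‖X‖| ≤ K := by
    intro X hX
    obtain ⟨h1, h2⟩ := hbound X hX
    have hXpos : 0 < ‖X‖ := norm_pos_iff.mpr hX
    have hFpos : 0 < ‖F X‖ := norm_pos_iff.mpr (hFne X hX)
    have l1 : Real.log (m * ‖X‖ ^ 4) ≤ Real.log ‖F X‖ := Real.log_le_log (by positivity) h1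
    have l2 : Real.log ‖F X‖ ≤ Real.log (M * ‖X‖ ^ 4) := Real.log_le_log hFpos h2
    rw [Real.log_mul (ne_of_gt hm) (by positivity), Real.log_pow] at l1
    rw [Real.log_mul (ne_of_gt hM) (by positivity), Real.log_pow] at l2
    push_cast at l1 l2
    have e1 : -|Real.log m| ≤ Real.log m := neg_abs_le _
    have e2 : Real.log M ≤ |Real.log M| := le_abs_self _
    have e3 : |Real.log m| ≤ K := le_max_left _ _
    have e4 : |Real.log M| ≤ K := le_max_right _ _
    rw [abs_le]
    constructor <;> linarith
  -- iterates never vanish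
  have hiter : ∀ (X : ℂ × ℂ), X ≠ 0 → ∀ n : ℕ, F^[n] X ≠ 0 := by
    intro X hX n
    induction n with
    | zero => simpa using hX
    | succ k ih =>
      rw [Function.iterate_succ_apply']
      exact hFne _ ih
  -- consecutive differences
  have hdiff : ∀ (X : ℂ × ℂ), X ≠ 0 → ∀ n : ℕ,
      |Real.log ‖F^[n + 1] X‖ / 4 ^ (n + 1) - Real.log ‖F^[n] X‖ / 4 ^ n|
        ≤ K * (1 / 4) ^ (n + 1) := by
    intro X hX n
    set Y : ℂ × ℂ := F^[n] X with hYdef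
    have hYne : Y ≠ 0 := hiter X hX n
    have hstep : F^[n + 1] X = F Y := by
      rw [Function.iterate_succ_apply']
    have hpow : (0 : ℝ) < (4 : ℝ) ^ (n + 1) := by positivity
    have heq : Real.log ‖F^[n + 1] X‖ / 4 ^ (n + 1) - Real.log ‖Y‖ / 4 ^ n
        = (Real.log ‖F Y‖ - 4 * Real.log ‖Y‖) / 4 ^ (n + 1) := by
      rw [hstep]
      field_simp
      ring
    rw [heq, abs_div, abs_of_pos hpow, div_le_iff₀ hpow]
    have : K * (1 / 4 : ℝ) ^ (n + 1) * 4 ^ (n + 1) = K := by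
      rw [div_pow, one_pow]
      field_simp
    rw [this]
    exact hlog Y hYne
  -- apply the abstract convergence lemma
  choose! L hL1 hL2 using fun (X : ℂ × ℂ) (hX : X ≠ 0) =>
    aux_seq (fun n => Real.log ‖F^[n] X‖ / 4 ^ n) K hK0 (hdiff X hX)
  refine ⟨L, fun X hX => hL1 X hX, ?_, ?_⟩
  · rw [Metric.tendstoUniformlyOn_iff]
    intro ε hε
    have hto : Tendsto (fun n : ℕ => K / 3 * (1 / 4 : ℝ) ^ n) atTop (nhds 0) := by
      have := tendsto_pow_atTop_nhds_zero_of_lt_one (by norm_num : (0:ℝ) ≤ 1/4)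
        (by norm_num : (1/4 : ℝ) < 1)
      simpa using this.const_mul (K / 3)
    filter_upwards [hto.eventually (gt_mem_nhds hε)] with n hn X hX
    rw [Real.dist_eq]
    exact lt_of_le_of_lt (hL2 X hX n) hn
  · refine ⟨K / 3, by linarith, fun X hX => ?_⟩
    have := hL2 X hX 0
    simpa using this
end

section
/- Let U ⊆ ℂ be open, and for each t ∈ U let F_t = (F_{1,t}, F_{2,t}) : ℂ² → ℂ² be given by F_{i,t}(z,w) = Σ_{j=0}^{4} c_{i,j}(t)·z^j·w^{4−j}, where each coefficient function c_{i,j} : U → ℂ is holomorphic, and suppose that for every t ∈ U the only common zero of F_{1,t} and F_{2,t} in ℂ² is (0,0). Then the function (t, z, w) ↦ G_{F_t}(z,w) is continuous on U × (ℂ² ∖ {(0,0)}). -/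
open Filter

/-- The family of homogeneous degree-4 maps `F_t(z,w) = (Σ_j c₀ⱼ(t)·zʲ·w⁴⁻ʲ, Σ_j c₁ⱼ(t)·zʲ·w⁴⁻ʲ)`
determined by the coefficient functions `c : Fin 2 → Fin 5 → ℂ → ℂ`. -/
noncomputable def famLift (c : Fin 2 → Fin 5 → ℂ → ℂ) (t : ℂ) : ℂ × ℂ → ℂ × ℂ :=
  fun X => (∑ j : Fin 5, c 0 j t * X.1 ^ (j : ℕ) * X.2 ^ (4 - (j : ℕ)),
            ∑ j : Fin 5, c 1 j t * X.1 ^ (j : ℕ) * X.2 ^ (4 - (j : ℕ)))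

set_option maxHeartbeats 1000000

lemma famLift_smul (c : Fin 2 → Fin 5 → ℂ → ℂ) (t : ℂ) (a : ℂ) (X : ℂ × ℂ) :
    famLift c t (a • X) = a ^ 4 • famLift c t X := by
  have h1 : (a • X).1 = a * X.1 := rfl
  have h2 : (a • X).2 = a * X.2 := rfl
  have e3 : ((3 : Fin 5) : ℕ) = 3 := rfl
  have e4 : ((4 : Fin 5) : ℕ) = 4 := rfl
  simp only [famLift, h1, h2, Prod.smul_def, smul_eq_mul, Prod.mk.injEq, Fin.sum_univ_five,
    e3, e4, Fin.val_zero, Fin.val_one, Fin.val_two]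
  norm_num
  constructor <;> ring

lemma famLift_norm_scale (c : Fin 2 → Fin 5 → ℂ → ℂ) (t : ℂ) (Y : ℂ × ℂ) (hY : Y ≠ 0) :
    ‖famLift c t Y‖ = ‖Y‖ ^ 4 * ‖famLift c t ((‖Y‖⁻¹ : ℂ) • Y)‖ := by
  have hn : (‖Y‖ : ℂ) ≠ 0 := by simp [norm_eq_zero, hY]
  have : Y = (‖Y‖ : ℂ) • ((‖Y‖⁻¹ : ℂ) • Y) := by
    rw [smul_smul, mul_inv_cancel₀ hn, one_smul]
  conv_lhs => rw [this, famLift_smul]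
  rw [norm_smul]
  norm_num [abs_of_nonneg (norm_nonneg Y)]

lemma famLift_contOn (U : Set ℂ) (c : Fin 2 → Fin 5 → ℂ → ℂ)
    (hc : ∀ i j, ContinuousOn (c i j) U) :
    ContinuousOn (fun p : ℂ × (ℂ × ℂ) => famLift c p.1 p.2) (U ×ˢ (Set.univ : Set (ℂ × ℂ))) := by
  unfold famLift
  have hfst : ∀ i j, ContinuousOn (fun p : ℂ × (ℂ × ℂ) => c i j p.1)
      (U ×ˢ (Set.univ : Set (ℂ × ℂ))) := fun i j =>
    (hc i j).comp continuousOn_fst (fun p hp => hp.1)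
  apply ContinuousOn.prodMk <;>
  · apply continuousOn_finset_sum
    intro j _
    exact ((hfst _ j).mul (continuous_snd.fst.pow _).continuousOn).mul
      (continuous_snd.snd.pow _).continuousOn

lemma iter_contOn (U : Set ℂ) (c : Fin 2 → Fin 5 → ℂ → ℂ)
    (hc : ∀ i j, ContinuousOn (c i j) U) (n : ℕ) :
    ContinuousOn (fun p : ℂ × (ℂ × ℂ) => (famLift c p.1)^[n] p.2)
      (U ×ˢ (Set.univ : Set (ℂ × ℂ))) := by
  induction n with
  | zero => simpa using continuousOn_snd
  | succ n ih =>
    have key : ∀ p : ℂ × (ℂ × ℂ), (famLift c p.1)^[n+1] p.2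
        = (fun q : ℂ × (ℂ × ℂ) => (famLift c q.1)^[n] q.2) (p.1, famLift c p.1 p.2) := by
      intro p; simp [Function.iterate_succ_apply]
    simp only [key]
    exact ih.comp (continuousOn_fst.prodMk (famLift_contOn U c hc))
      (fun p hp => ⟨hp.1, Set.mem_univ _⟩)

/-- Let `U ⊆ ℂ` be open and, for each `t ∈ U`, let `F_t : ℂ² → ℂ²` be a pair of homogeneous
degree-4 polynomials with coefficients holomorphic in `t`, such that for every `t ∈ U` the
only common zero of `F_t` in `ℂ²` is `(0,0)`.  Then `(t, z, w) ↦ G_{F_t}(z,w)` is continuous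
on `U × (ℂ² ∖ {(0,0)})`, where `G_{F_t}(X) = lim_n 4^{−n} log ‖F_tⁿ(X)‖`. -/
theorem escape_rate_continuous (U : Set ℂ) (hU : IsOpen U)
    (c : Fin 2 → Fin 5 → ℂ → ℂ) (hc : ∀ i j, DifferentiableOn ℂ (c i j) U)
    (hzero : ∀ t ∈ U, ∀ X : ℂ × ℂ, famLift c t X = 0 → X = 0)
    (G : ℂ → ℂ × ℂ → ℝ)
    (hG : ∀ t ∈ U, ∀ X : ℂ × ℂ, X ≠ 0 →
      Tendsto (fun n : ℕ => Real.log ‖(famLift c t)^[n] X‖ / 4 ^ n) atTop (nhds (G t X))) :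
    ContinuousOn (fun p : ℂ × (ℂ × ℂ) => G p.1 p.2) (U ×ˢ {X : ℂ × ℂ | X ≠ 0}) := by
  have hcC : ∀ i j, ContinuousOn (c i j) U := fun i j => (hc i j).continuousOn
  -- iterates stay nonzero
  have hiter_ne : ∀ t ∈ U, ∀ X : ℂ × ℂ, X ≠ 0 → ∀ n, (famLift c t)^[n] X ≠ 0 := by
    intro t ht X hX n
    induction n with
    | zero => simpa using hX
    | succ n ih =>
      rw [Function.iterate_succ_apply']
      intro h
      exact ih (hzero t ht _ h)
  intro p₀ hp₀
  obtain ⟨ht₀, hX₀⟩ := hp₀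
  obtain ⟨r, hr0, hrU⟩ := Metric.nhds_basis_closedBall.mem_iff.1 (hU.mem_nhds ht₀)
  set K : Set ℂ := Metric.closedBall p₀.1 r with hK
  have hKc : IsCompact K := isCompact_closedBall _ _
  set S : Set (ℂ × ℂ) := Metric.sphere 0 1 with hS
  have hSmem : ∀ Y : ℂ × ℂ, Y ≠ 0 → (‖Y‖⁻¹ : ℂ) • Y ∈ S := by
    intro Y hY
    have h0 : ‖Y‖ ≠ 0 := norm_ne_zero_iff.2 hY
    rw [hS, mem_sphere_zero_iff_norm, norm_smul]
    simp [h0, abs_of_nonneg (norm_nonneg Y), inv_mul_cancel₀ h0]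
  have hKS : IsCompact (K ×ˢ S) := hKc.prod (isCompact_sphere 0 1)
  have hne : (K ×ˢ S).Nonempty := by
    refine ⟨(p₀.1, ((1:ℂ), (0:ℂ))), Metric.mem_closedBall_self hr0.le, ?_⟩
    rw [hS, mem_sphere_zero_iff_norm]
    simp [Prod.norm_def]
  have hcont : ContinuousOn (fun p : ℂ × (ℂ × ℂ) => ‖famLift c p.1 p.2‖) (K ×ˢ S) :=
    ((famLift_contOn U c hcC).mono
      (Set.prod_mono hrU (Set.subset_univ _))).norm
  obtain ⟨pm, hpm, hmin⟩ := hKS.exists_isMinOn hne hcont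
  obtain ⟨pM, hpM, hmax⟩ := hKS.exists_isMaxOn hne hcont
  set m : ℝ := ‖famLift c pm.1 pm.2‖ with hm
  set M : ℝ := ‖famLift c pM.1 pM.2‖ with hMdef
  have hm0 : 0 < m := by
    rw [hm, norm_pos_iff]
    intro h
    have h2 : pm.2 = 0 := hzero pm.1 (hrU hpm.1) pm.2 h
    have := hpm.2
    rw [hS, mem_sphere_zero_iff_norm, h2] at this
    simp at this
  have hM0 : 0 < M := by
    have := isMinOn_iff.1 hmin _ hpM
    calc (0:ℝ) < m := hm0
      _ ≤ _ := this
  -- the sandwich bound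
  have hsand : ∀ t ∈ K, ∀ Y : ℂ × ℂ, Y ≠ 0 →
      m * ‖Y‖ ^ 4 ≤ ‖famLift c t Y‖ ∧ ‖famLift c t Y‖ ≤ M * ‖Y‖ ^ 4 := by
    intro t ht Y hY
    have hZ : (t, (‖Y‖⁻¹ : ℂ) • Y) ∈ K ×ˢ S := ⟨ht, hSmem Y hY⟩
    have h1 : m ≤ ‖famLift c t ((‖Y‖⁻¹ : ℂ) • Y)‖ := by
      have := isMinOn_iff.1 hmin _ hZ; simpa [hm] using this
    have h2 : ‖famLift c t ((‖Y‖⁻¹ : ℂ) • Y)‖ ≤ M := by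
      have := isMaxOn_iff.1 hmax _ hZ; simpa [hMdef] using this
    rw [famLift_norm_scale c t Y hY]
    have hp4 : (0:ℝ) ≤ ‖Y‖ ^ 4 := by positivity
    constructor
    · calc m * ‖Y‖ ^ 4 = ‖Y‖ ^ 4 * m := mul_comm _ _
        _ ≤ _ := mul_le_mul_of_nonneg_left h1 hp4
    · calc ‖Y‖ ^ 4 * ‖famLift c t ((‖Y‖⁻¹ : ℂ) • Y)‖ ≤ ‖Y‖ ^ 4 * M :=
          mul_le_mul_of_nonneg_left h2 hp4
        _ = M * ‖Y‖ ^ 4 := mul_comm _ _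
  set C : ℝ := max |Real.log m| |Real.log M| with hC
  have hC0 : 0 ≤ C := le_trans (abs_nonneg _) (le_max_left _ _)
  have hlog : ∀ t ∈ K, ∀ Y : ℂ × ℂ, Y ≠ 0 →
      |Real.log ‖famLift c t Y‖ - 4 * Real.log ‖Y‖| ≤ C := by
    intro t ht Y hY
    obtain ⟨h1, h2⟩ := hsand t ht Y hY
    have hYn : (0:ℝ) < ‖Y‖ ^ 4 := pow_pos (norm_pos_iff.2 hY) 4
    have hF0 : 0 < ‖famLift c t Y‖ := lt_of_lt_of_le (mul_pos hm0 hYn) h1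
    have e1 : Real.log m ≤ Real.log ‖famLift c t Y‖ - 4 * Real.log ‖Y‖ := by
      have := Real.log_le_log (mul_pos hm0 hYn) h1
      rw [Real.log_mul hm0.ne' hYn.ne', Real.log_pow] at this
      push_cast at this; linarith
    have e2 : Real.log ‖famLift c t Y‖ - 4 * Real.log ‖Y‖ ≤ Real.log M := by
      have := Real.log_le_log hF0 h2
      rw [Real.log_mul hM0.ne' hYn.ne', Real.log_pow] at this
      push_cast at this; linarith
    rw [abs_le]
    constructor
    · calc -C ≤ -|Real.log m| := neg_le_neg (le_max_left _ _)
        _ ≤ Real.log m := neg_abs_le _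
        _ ≤ _ := e1
    · calc _ ≤ Real.log M := e2
        _ ≤ |Real.log M| := le_abs_self _
        _ ≤ C := le_max_right _ _
  -- the approximants
  set g : ℕ → ℂ × (ℂ × ℂ) → ℝ :=
    fun n p => Real.log ‖(famLift c p.1)^[n] p.2‖ / 4 ^ n with hg
  set W : Set (ℂ × (ℂ × ℂ)) := K ×ˢ {X : ℂ × ℂ | X ≠ 0} with hW
  have hWU : ∀ p ∈ W, p.1 ∈ U ∧ p.2 ≠ 0 := fun p hp => ⟨hrU hp.1, hp.2⟩
  have hstep : ∀ p ∈ W, ∀ n : ℕ, |g (n+1) p - g n p| ≤ C / 4 ^ (n+1) := by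
    intro p hp n
    obtain ⟨hpU, hp2⟩ := hWU p hp
    set Y := (famLift c p.1)^[n] p.2 with hY
    have hYne : Y ≠ 0 := hiter_ne p.1 hpU p.2 hp2 n
    have hiter : (famLift c p.1)^[n+1] p.2 = famLift c p.1 Y := by
      rw [hY, Function.iterate_succ_apply']
    have : g (n+1) p - g n p
        = (Real.log ‖famLift c p.1 Y‖ - 4 * Real.log ‖Y‖) / 4 ^ (n+1) := by
      rw [hg]
      simp only [hiter]
      field_simp
      ring
    rw [this, abs_div, abs_of_pos (by positivity : (0:ℝ) < (4:ℝ) ^ (n+1))]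
    exact div_le_div_of_nonneg_right (hlog p.1 hp.1 Y hYne) (by positivity) |>.trans_eq rfl
  have hcau : ∀ p ∈ W, ∀ n N : ℕ, n ≤ N →
      |g N p - g n p| ≤ C / 3 * ((1/4 : ℝ) ^ n - (1/4 : ℝ) ^ N) := by
    intro p hp n N hnN
    induction N, hnN using Nat.le_induction with
    | base => simp
    | succ N hnN ih =>
      have h1 := hstep p hp N
      calc |g (N+1) p - g n p| ≤ |g (N+1) p - g N p| + |g N p - g n p| := by
            have := abs_sub_le (g (N+1) p) (g N p) (g n p); linarith [abs_sub_le (g (N+1) p) (g N p) (g n p)]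
        _ ≤ C / 4 ^ (N+1) + C / 3 * ((1/4 : ℝ) ^ n - (1/4 : ℝ) ^ N) := add_le_add h1 ih
        _ = C / 3 * ((1/4 : ℝ) ^ n - (1/4 : ℝ) ^ (N+1)) := by
            field_simp
            have h4 : (1/4:ℝ)^N * 4^N = 1 := by rw [← mul_pow]; norm_num
            linear_combination (-3 * C) * h4
  have hGb : ∀ p ∈ W, ∀ n : ℕ, |G p.1 p.2 - g n p| ≤ C / 3 * (1/4 : ℝ) ^ n := by
    intro p hp n
    obtain ⟨hpU, hp2⟩ := hWU p hp
    have htend : Tendsto (fun N => |g N p - g n p|) atTop (nhds |G p.1 p.2 - g n p|) :=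
      (((hG p.1 hpU p.2 hp2).sub_const (g n p)).abs)
    refine le_of_tendsto htend ?_
    filter_upwards [eventually_ge_atTop n] with N hN
    calc |g N p - g n p| ≤ C / 3 * ((1/4 : ℝ) ^ n - (1/4 : ℝ) ^ N) := hcau p hp n N hN
      _ ≤ C / 3 * (1/4 : ℝ) ^ n := by
          have : (0:ℝ) ≤ (1/4 : ℝ) ^ N := by positivity
          nlinarith
  -- uniform convergence on W
  have hunif : TendstoUniformlyOn g (fun p => G p.1 p.2) atTop W := by
    rw [Metric.tendstoUniformlyOn_iff]
    intro ε hε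
    have hto : Tendsto (fun n : ℕ => C / 3 * (1/4 : ℝ) ^ n) atTop (nhds 0) := by
      have := tendsto_pow_atTop_nhds_zero_of_lt_one (by norm_num : (0:ℝ) ≤ 1/4)
        (by norm_num : (1/4 : ℝ) < 1)
      simpa using this.const_mul (C / 3)
    filter_upwards [hto.eventually (gt_mem_nhds hε)] with n hn p hp
    rw [Real.dist_eq]
    calc |G p.1 p.2 - g n p| ≤ C / 3 * (1/4 : ℝ) ^ n := hGb p hp n
      _ < ε := hn
  -- each g n is continuous on W
  have hgcont : ∀ n : ℕ, ContinuousOn (g n) W := by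
    intro n
    have h1 : ContinuousOn (fun p : ℂ × (ℂ × ℂ) => (famLift c p.1)^[n] p.2) W :=
      (iter_contOn U c hcC n).mono (Set.prod_mono hrU (Set.subset_univ _))
    have h2 : ContinuousOn (fun p : ℂ × (ℂ × ℂ) => Real.log ‖(famLift c p.1)^[n] p.2‖) W :=
      h1.norm.log (fun p hp =>
        norm_ne_zero_iff.2 (hiter_ne p.1 (hWU p hp).1 p.2 (hWU p hp).2 n))
    exact h2.div_const _
  have hGcont : ContinuousOn (fun p : ℂ × (ℂ × ℂ) => G p.1 p.2) W :=
    hunif.continuousOn (Eventually.of_forall hgcont).frequently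
  -- conclude at p₀
  have hWnhds : W ∈ nhds p₀ := by
    rw [hW, ← Prod.mk.eta (p := p₀)]
    exact prod_mem_nhds (Metric.closedBall_mem_nhds _ hr0)
      ((isOpen_compl_singleton).mem_nhds hX₀)
  exact ((hGcont.continuousAt hWnhds).continuousWithinAt)
end

section
/- Let U ⊆ ℂ be an open neighborhood of t₀, and let ψ, w : U → ℂ be holomorphic functions, neither identically zero on any neighborhood of t₀, such that N := ord_{t₀} ψ ≥ 1 and m := ord_{t₀} w satisfies 0 ≤ m ≤ N/2. Then for all t ≠ t₀ sufficiently close to t₀, the series Σ_{n≥1} log |(1 − ψ(t)ⁿ·w(t))·(1 − ψ(t)ⁿ·w(t)^{−1})| converges absolutely, and its sum tends to 0 as t → t₀ through values t ≠ t₀. -/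
open Filter
open scoped Topology

lemma log_abs_one_sub_le {z : ℂ} (hz : ‖z‖ ≤ 1/2) :
    |Real.log (‖1 - z‖)| ≤ 2 * ‖z‖ := by
  set r := ‖z‖ with hr
  have hr0 : 0 ≤ r := norm_nonneg z
  set x := ‖1 - z‖ with hx
  have hx_le : x ≤ 1 + r := by
    have := norm_add_le 1 (-z)
    simpa [sub_eq_add_neg, hx, hr] using this
  have hx_ge : 1 - r ≤ x := by
    have := norm_add_le (1 - z) z
    simp at this
    linarith
  have hx_pos : 0 < x := by linarith
  rw [abs_le]
  constructor
  · -- lower bound: -2r ≤ log x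
    have h2 : Real.log x⁻¹ ≤ x⁻¹ - 1 := Real.log_le_sub_one_of_pos (inv_pos.mpr hx_pos)
    rw [Real.log_inv] at h2
    have hinv : x * x⁻¹ = 1 := mul_inv_cancel₀ (ne_of_gt hx_pos)
    have hxinv_pos : 0 < x⁻¹ := inv_pos.mpr hx_pos
    nlinarith
  · have h1 : Real.log x ≤ x - 1 := Real.log_le_sub_one_of_pos hx_pos
    linarith

lemma per_point (p q : ℂ) (hp : ‖p‖ ≤ 1/2)
    (hc : ‖p * q‖ ≤ 1/2) (hd : ‖p * q⁻¹‖ ≤ 1/2) :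
    Summable (fun n : ℕ =>
      |Real.log (‖(1 - p ^ (n + 1) * q) * (1 - p ^ (n + 1) * q⁻¹)‖)|) ∧
    ∑' n : ℕ, |Real.log (‖(1 - p ^ (n + 1) * q) * (1 - p ^ (n + 1) * q⁻¹)‖)|
      ≤ 4 * (‖p * q‖ + ‖p * q⁻¹‖) := by
  set r := ‖p‖ with hrdef
  set c := ‖p * q‖ with hcdef
  set d := ‖p * q⁻¹‖ with hddef
  have hr0 : 0 ≤ r := norm_nonneg p
  have hc0 : 0 ≤ c := norm_nonneg _
  have hd0 : 0 ≤ d := norm_nonneg _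
  have hrlt : r < 1 := lt_of_le_of_lt hp (by norm_num)
  have hrpow : ∀ n : ℕ, r ^ n ≤ 1 := fun n => pow_le_one₀ hr0 hrlt.le
  have habs1 : ∀ n : ℕ, ‖p ^ (n + 1) * q‖ = r ^ n * c := by
    intro n
    have : p ^ (n + 1) * q = p ^ n * (p * q) := by ring
    rw [this, norm_mul, norm_pow]
  have habs2 : ∀ n : ℕ, ‖p ^ (n + 1) * q⁻¹‖ = r ^ n * d := by
    intro n
    have : p ^ (n + 1) * q⁻¹ = p ^ n * (p * q⁻¹) := by ring
    rw [this, norm_mul, norm_pow]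
  have hz1 : ∀ n : ℕ, ‖p ^ (n + 1) * q‖ ≤ 1/2 := by
    intro n; rw [habs1 n]
    calc r ^ n * c ≤ 1 * c := by
          exact mul_le_mul_of_nonneg_right (hrpow n) hc0
      _ ≤ 1/2 := by simpa using hc
  have hz2 : ∀ n : ℕ, ‖p ^ (n + 1) * q⁻¹‖ ≤ 1/2 := by
    intro n; rw [habs2 n]
    calc r ^ n * d ≤ 1 * d := by
          exact mul_le_mul_of_nonneg_right (hrpow n) hd0
      _ ≤ 1/2 := by simpa using hd
  -- split the log
  have hsplit : ∀ n : ℕ,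
      Real.log (‖(1 - p ^ (n + 1) * q) * (1 - p ^ (n + 1) * q⁻¹)‖)
        = Real.log (‖1 - p ^ (n + 1) * q‖)
          + Real.log (‖1 - p ^ (n + 1) * q⁻¹‖) := by
    intro n
    have h1 : ‖1 - p ^ (n + 1) * q‖ ≠ 0 := by
      intro h
      have h3 := norm_add_le (1 - p ^ (n + 1) * q) (p ^ (n + 1) * q)
      simp only [sub_add_cancel, norm_one, h, zero_add] at h3
      linarith [hz1 n]
    have h2 : ‖1 - p ^ (n + 1) * q⁻¹‖ ≠ 0 := by
      intro h
      have h3 := norm_add_le (1 - p ^ (n + 1) * q⁻¹) (p ^ (n + 1) * q⁻¹)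
      simp only [sub_add_cancel, norm_one, h, zero_add] at h3
      linarith [hz2 n]
    rw [norm_mul, Real.log_mul h1 h2]
  have hbound : ∀ n : ℕ,
      |Real.log (‖(1 - p ^ (n + 1) * q) * (1 - p ^ (n + 1) * q⁻¹)‖)|
        ≤ (2 * (c + d)) * r ^ n := by
    intro n
    rw [hsplit n]
    calc |Real.log (‖1 - p ^ (n + 1) * q‖)
          + Real.log (‖1 - p ^ (n + 1) * q⁻¹‖)|
        ≤ |Real.log (‖1 - p ^ (n + 1) * q‖)|
          + |Real.log (‖1 - p ^ (n + 1) * q⁻¹‖)| := abs_add_le _ _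
      _ ≤ 2 * ‖p ^ (n + 1) * q‖ + 2 * ‖p ^ (n + 1) * q⁻¹‖ := by
          gcongr <;> [exact log_abs_one_sub_le (hz1 n); exact log_abs_one_sub_le (hz2 n)]
      _ = (2 * (c + d)) * r ^ n := by rw [habs1 n, habs2 n]; ring
  have hgeom : Summable (fun n : ℕ => (2 * (c + d)) * r ^ n) :=
    (summable_geometric_of_lt_one hr0 hrlt).mul_left _
  have hsummable : Summable (fun n : ℕ =>
      |Real.log (‖(1 - p ^ (n + 1) * q) * (1 - p ^ (n + 1) * q⁻¹)‖)|) :=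
    Summable.of_nonneg_of_le (fun n => abs_nonneg _) hbound hgeom
  refine ⟨hsummable, ?_⟩
  have htsum : ∑' n : ℕ, (2 * (c + d)) * r ^ n = (2 * (c + d)) * (1 - r)⁻¹ := by
    rw [tsum_mul_left, tsum_geometric_of_lt_one hr0 hrlt]
  calc ∑' n : ℕ, |Real.log (‖(1 - p ^ (n + 1) * q) * (1 - p ^ (n + 1) * q⁻¹)‖)|
      ≤ ∑' n : ℕ, (2 * (c + d)) * r ^ n := Summable.tsum_le_tsum hbound hsummable hgeom
    _ = (2 * (c + d)) * (1 - r)⁻¹ := htsum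
    _ ≤ 4 * (c + d) := by
        have h1 : (1 - r)⁻¹ ≤ 2 := by
          rw [inv_le_comm₀ (by linarith) (by norm_num)]
          linarith
        have : (2 * (c + d)) * (1 - r)⁻¹ ≤ (2 * (c + d)) * 2 := by
          apply mul_le_mul_of_nonneg_left h1 (by positivity)
        linarith


/-- Let `U ⊆ ℂ` be an open neighborhood of `t₀` and `ψ, w : U → ℂ` holomorphic, neither
identically zero near `t₀`, with `N := ord_{t₀} ψ ≥ 1` and `m := ord_{t₀} w` satisfying
`0 ≤ m ≤ N/2` (the orders are encoded by factorizations `ψ(t) = (t−t₀)^N gψ(t)` and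
`w(t) = (t−t₀)^m g_w(t)` with `gψ, g_w` analytic and nonvanishing at `t₀`).  Then for all
`t ≠ t₀` sufficiently close to `t₀` the series
`Σ_{n≥1} log |(1 − ψ(t)ⁿ w(t))(1 − ψ(t)ⁿ w(t)⁻¹)|` converges absolutely, and its sum tends
to `0` as `t → t₀` through values `t ≠ t₀`. -/
theorem tail_series_tendsto_zero (U : Set ℂ) (hU : IsOpen U) (t₀ : ℂ) (ht₀ : t₀ ∈ U)
    (ψ w : ℂ → ℂ) (hψ : DifferentiableOn ℂ ψ U) (hw : DifferentiableOn ℂ w U)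
    (N m : ℕ) (hN : 1 ≤ N) (hm : 2 * m ≤ N)
    (gψ gw : ℂ → ℂ) (hgψ : AnalyticAt ℂ gψ t₀) (hgψ0 : gψ t₀ ≠ 0)
    (hgw : AnalyticAt ℂ gw t₀) (hgw0 : gw t₀ ≠ 0)
    (hψfac : ∀ᶠ t in 𝓝 t₀, ψ t = (t - t₀) ^ N * gψ t)
    (hwfac : ∀ᶠ t in 𝓝 t₀, w t = (t - t₀) ^ m * gw t) :
    (∀ᶠ t in 𝓝[≠] t₀, Summable (fun n : ℕ =>
        |Real.log (‖(1 - ψ t ^ (n + 1) * w t) *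
          (1 - ψ t ^ (n + 1) * (w t)⁻¹)‖)|)) ∧
      Tendsto (fun t : ℂ => ∑' n : ℕ,
          Real.log (‖(1 - ψ t ^ (n + 1) * w t) *
            (1 - ψ t ^ (n + 1) * (w t)⁻¹)‖))
        (𝓝[≠] t₀) (nhds 0) := by
  have hcψ : ContinuousAt gψ t₀ := hgψ.continuousAt
  have hcw : ContinuousAt gw t₀ := hgw.continuousAt
  -- ψ tends to 0 on the punctured neighborhood
  have hψ0 : Tendsto ψ (𝓝[≠] t₀) (𝓝 0) := by
    have hcont : Tendsto (fun t => (t - t₀) ^ N * gψ t) (𝓝 t₀) (𝓝 0) := by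
      have h1 : Tendsto (fun t : ℂ => t - t₀) (𝓝 t₀) (𝓝 0) := by
        have h2 : ContinuousAt (fun t : ℂ => t - t₀) t₀ :=
          continuousAt_id.sub continuousAt_const
        simpa using h2.tendsto
      simpa [zero_pow (show N ≠ 0 by omega)] using (h1.pow N).mul hcψ
    exact (tendsto_nhdsWithin_of_tendsto_nhds hcont).congr'
      ((hψfac.filter_mono nhdsWithin_le_nhds).mono fun t ht => ht.symm)
  -- ψ * w tends to 0
  have hψw0 : Tendsto (fun t => ψ t * w t) (𝓝[≠] t₀) (𝓝 0) := by
    have hcont : Tendsto (fun t => (t - t₀) ^ (N + m) * (gψ t * gw t)) (𝓝 t₀) (𝓝 0) := by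
      have h1 : Tendsto (fun t : ℂ => t - t₀) (𝓝 t₀) (𝓝 0) := by
        have h2 : ContinuousAt (fun t : ℂ => t - t₀) t₀ :=
          continuousAt_id.sub continuousAt_const
        simpa using h2.tendsto
      simpa [zero_pow (show N + m ≠ 0 by omega)] using (h1.pow (N + m)).mul (hcψ.mul hcw)
    refine (tendsto_nhdsWithin_of_tendsto_nhds hcont).congr' ?_
    filter_upwards [(hψfac.and hwfac).filter_mono nhdsWithin_le_nhds] with t ht
    rw [ht.1, ht.2, pow_add]; ring
  -- ψ * w⁻¹ tends to 0
  have hψwi0 : Tendsto (fun t => ψ t * (w t)⁻¹) (𝓝[≠] t₀) (𝓝 0) := by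
    have hcont : Tendsto (fun t => (t - t₀) ^ (N - m) * (gψ t * (gw t)⁻¹)) (𝓝 t₀) (𝓝 0) := by
      have h1 : Tendsto (fun t : ℂ => t - t₀) (𝓝 t₀) (𝓝 0) := by
        have h2 : ContinuousAt (fun t : ℂ => t - t₀) t₀ :=
          continuousAt_id.sub continuousAt_const
        simpa using h2.tendsto
      simpa [zero_pow (show N - m ≠ 0 by omega)] using
        (h1.pow (N - m)).mul (hcψ.mul (hcw.inv₀ hgw0))
    refine (tendsto_nhdsWithin_of_tendsto_nhds hcont).congr' ?_
    filter_upwards [(hψfac.and (hwfac.and (hcw.eventually_ne hgw0))).filter_mono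
      nhdsWithin_le_nhds, self_mem_nhdsWithin] with t ht htne
    obtain ⟨h1, h2, h3⟩ := ht
    have ht0 : t - t₀ ≠ 0 := sub_ne_zero.mpr htne
    rw [h1, h2, show N = (N - m) + m by omega, pow_add]
    field_simp
    rw [Nat.add_sub_cancel]
    ring
  -- pass to absolute values
  have habsψ : Tendsto (fun t => ‖ψ t‖) (𝓝[≠] t₀) (𝓝 0) := by
    have := (continuous_norm.tendsto 0).comp hψ0
    simpa only [Function.comp_def, norm_zero] using this
  have habsψw : Tendsto (fun t => ‖ψ t * w t‖) (𝓝[≠] t₀) (𝓝 0) := by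
    have := (continuous_norm.tendsto 0).comp hψw0
    simpa only [Function.comp_def, norm_zero] using this
  have habsψwi : Tendsto (fun t => ‖ψ t * (w t)⁻¹‖) (𝓝[≠] t₀) (𝓝 0) := by
    have := (continuous_norm.tendsto 0).comp hψwi0
    simpa only [Function.comp_def, norm_zero] using this
  have e1 : ∀ᶠ t in 𝓝[≠] t₀, ‖ψ t‖ ≤ 1/2 :=
    habsψ.eventually (eventually_le_nhds (by norm_num))
  have e2 : ∀ᶠ t in 𝓝[≠] t₀, ‖ψ t * w t‖ ≤ 1/2 :=
    habsψw.eventually (eventually_le_nhds (by norm_num))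
  have e3 : ∀ᶠ t in 𝓝[≠] t₀, ‖ψ t * (w t)⁻¹‖ ≤ 1/2 :=
    habsψwi.eventually (eventually_le_nhds (by norm_num))
  constructor
  · filter_upwards [e1, e2, e3] with t h1 h2 h3
    exact (per_point (ψ t) (w t) h1 h2 h3).1
  · have hg : Tendsto
        (fun t => 4 * (‖ψ t * w t‖ + ‖ψ t * (w t)⁻¹‖))
        (𝓝[≠] t₀) (𝓝 0) := by
      have := (habsψw.add habsψwi).const_mul (4 : ℝ)
      simpa using this
    apply squeeze_zero_norm' ?_ hg
    filter_upwards [e1, e2, e3] with t h1 h2 h3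
    obtain ⟨hsum, hle⟩ := per_point (ψ t) (w t) h1 h2 h3
    calc ‖∑' n : ℕ, Real.log (‖(1 - ψ t ^ (n + 1) * w t) *
            (1 - ψ t ^ (n + 1) * (w t)⁻¹)‖)‖
        ≤ ∑' n : ℕ, ‖Real.log (‖(1 - ψ t ^ (n + 1) * w t) *
            (1 - ψ t ^ (n + 1) * (w t)⁻¹)‖)‖ := by
          apply norm_tsum_le_tsum_norm
          simpa [Real.norm_eq_abs] using hsum
      _ ≤ 4 * (‖ψ t * w t‖ + ‖ψ t * (w t)⁻¹‖) := by
          simpa [Real.norm_eq_abs] using hle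
end

section
/- Let K be a field complete with respect to a nontrivial nonarchimedean multiplicative absolute value |·|, and let F = (F₁, F₂) with F₁, F₂ ∈ K[z,w] homogeneous of degree 4 whose only common zero in L² is (0,0) for every field extension L of K with an absolute value extending |·| (equivalently, F₁ and F₂ have no common zero other than (0,0) over an algebraic closure of K). Write ‖(z,w)‖ = max(|z|, |w|). Then for every X ∈ K² ∖ {(0,0)} the limit G_F(X) = lim_{n→∞} 4^{−n} log ‖Fⁿ(X)‖ exists, there is a constant C ≥ 0 with |G_F(X) − log ‖X‖| ≤ C for all X ≠ (0,0), and G_F(αX) = G_F(X) + log |α| for every α ∈ K with α ≠ 0. -/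
open MvPolynomial Filter

private lemma eval_bound {K : Type*} [NormedField K] (a : Polynomial K) :
    ∃ M : ℝ, 0 < M ∧ ∀ t : K, ‖t‖ ≤ 1 → ‖a.eval t‖ ≤ M := by
  refine ⟨1 + ∑ i ∈ Finset.range (a.natDegree + 1), ‖a.coeff i‖, by positivity, fun t ht => ?_⟩
  rw [Polynomial.eval_eq_sum_range]
  calc ‖∑ i ∈ Finset.range (a.natDegree + 1), a.coeff i * t ^ i‖
      ≤ ∑ i ∈ Finset.range (a.natDegree + 1), ‖a.coeff i * t ^ i‖ := norm_sum_le _ _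
    _ ≤ ∑ i ∈ Finset.range (a.natDegree + 1), ‖a.coeff i‖ := by
        refine Finset.sum_le_sum fun i _ => ?_
        rw [norm_mul, norm_pow]
        exact mul_le_of_le_one_right (norm_nonneg _) (pow_le_one₀ (norm_nonneg _) ht)
    _ ≤ _ := by linarith

private lemma coprime_of_no_common_root {K L : Type*} [Field K] [Field L] [Algebra K L]
    [IsAlgClosed L] (p q : Polynomial K)
    (h : ∀ t : L, Polynomial.aeval t p = 0 → Polynomial.aeval t q = 0 → False) :
    IsCoprime p q := by
  classical
  rw [← EuclideanDomain.gcd_isUnit_iff]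
  by_contra hu
  set g := EuclideanDomain.gcd p q with hg
  have hg0 : g ≠ 0 := by
    intro h0
    obtain ⟨hp, hq⟩ := EuclideanDomain.gcd_eq_zero_iff.mp h0
    exact h 0 (by simp [hp]) (by simp [hq])
  have hdeg : (g.map (algebraMap K L)).degree ≠ 0 := by
    rw [Polynomial.degree_map]
    intro hd
    exact hu (Polynomial.isUnit_iff_degree_eq_zero.mpr hd)
  obtain ⟨t, ht⟩ := IsAlgClosed.exists_root _ hdeg
  have hroot : Polynomial.aeval t g = 0 := by
    rw [Polynomial.aeval_def, ← Polynomial.eval_map]; exact ht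
  have hp : Polynomial.aeval t p = 0 := by
    obtain ⟨e, he⟩ := EuclideanDomain.gcd_dvd_left p q
    rw [he, map_mul, hroot, zero_mul]
  have hq : Polynomial.aeval t q = 0 := by
    obtain ⟨e, he⟩ := EuclideanDomain.gcd_dvd_right p q
    rw [he, map_mul, hroot, zero_mul]
  exact h t hp hq

private lemma chart_bound {K : Type*} [NormedField K] {p q : Polynomial K} (h : IsCoprime p q) :
    ∃ c : ℝ, 0 < c ∧ ∀ t : K, ‖t‖ ≤ 1 → c ≤ max ‖p.eval t‖ ‖q.eval t‖ := by
  obtain ⟨a, b, hab⟩ := h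
  obtain ⟨Ma, hMa, ha⟩ := eval_bound a
  obtain ⟨Mb, hMb, hb⟩ := eval_bound b
  refine ⟨1 / (Ma + Mb), by positivity, fun t ht => ?_⟩
  rw [div_le_iff₀ (by positivity)]
  have h1 : (1 : K) = a.eval t * p.eval t + b.eval t * q.eval t := by
    have := congrArg (Polynomial.eval t) hab
    simpa using this.symm
  have h2 : (1 : ℝ) ≤ Ma * max ‖p.eval t‖ ‖q.eval t‖ + Mb * max ‖p.eval t‖ ‖q.eval t‖ := by
    calc (1:ℝ) = ‖a.eval t * p.eval t + b.eval t * q.eval t‖ := by rw [← h1, norm_one]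
      _ ≤ ‖a.eval t * p.eval t‖ + ‖b.eval t * q.eval t‖ := norm_add_le _ _
      _ ≤ Ma * max ‖p.eval t‖ ‖q.eval t‖ + Mb * max ‖p.eval t‖ ‖q.eval t‖ := by
          rw [norm_mul, norm_mul]
          gcongr
          · exact ha t ht
          · exact le_max_left _ _
          · exact hb t ht
          · exact le_max_right _ _
  nlinarith [le_max_left ‖p.eval t‖ ‖q.eval t‖, norm_nonneg (p.eval t)]

private lemma homog_eval_smul {K : Type*} [NormedField K] {n : ℕ}
    {P : MvPolynomial (Fin 2) K} (h : P.IsHomogeneous n)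
    (c : K) (x : Fin 2 → K) : eval (c • x) P = c ^ n * eval x P := by
  rw [eval_eq', eval_eq', Finset.mul_sum]
  refine Finset.sum_congr rfl fun d hd => ?_
  have hdeg : d.degree = n := by
    by_contra hne
    exact mem_support_iff.mp hd (h.coeff_eq_zero hne)
  have hsum : ∑ i, d i = n := by
    rw [← hdeg, Finsupp.degree]
    exact (Finset.sum_subset (Finset.subset_univ _)
      fun i _ hi => Finsupp.notMem_support_iff.mp hi).symm
  have key : ∏ i, (c • x) i ^ d i = c ^ n * ∏ i, x i ^ d i := by
    calc ∏ i, (c • x) i ^ d i = ∏ i, (c ^ d i * x i ^ d i) := by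
          simp [mul_pow]
      _ = (∏ i, c ^ d i) * ∏ i, x i ^ d i := Finset.prod_mul_distrib
      _ = c ^ n * ∏ i, x i ^ d i := by rw [Finset.prod_pow_eq_pow_sum, hsum]
  rw [key]; ring

private lemma aeval_eval {K : Type*} [CommSemiring K] (P : MvPolynomial (Fin 2) K)
    (v : Fin 2 → Polynomial K) (t : K) :
    (MvPolynomial.aeval v P).eval t = eval (fun i => (v i).eval t) P := by
  rw [← Polynomial.coe_aeval_eq_eval, MvPolynomial.comp_aeval_apply]
  simp only [Polynomial.coe_aeval_eq_eval]
  rw [MvPolynomial.aeval_def, Algebra.algebraMap_self, eval₂_id]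

/-- Let `K` be a field complete with respect to a nontrivial nonarchimedean multiplicative
absolute value, and let `F = (F₁, F₂)` with `F₁, F₂ ∈ K[z,w]` homogeneous of degree 4 having
no common zero other than `(0,0)` over an algebraic closure of `K`.  Then for every
`X ∈ K² ∖ {(0,0)}` the limit `G_F(X) = lim_n 4^{−n} log ‖Fⁿ(X)‖` exists (with
`‖(z,w)‖ = max (|z|, |w|)`), there is `C ≥ 0` with `|G_F(X) − log ‖X‖| ≤ C` for all
`X ≠ (0,0)`, and `G_F(αX) = G_F(X) + log |α|` for every `α ≠ 0`. -/
theorem nonarchimedean_escape_rate (K : Type*) [NontriviallyNormedField K]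
    [IsUltrametricDist K] [CompleteSpace K]
    (F₁ F₂ : MvPolynomial (Fin 2) K)
    (hF₁ : F₁.IsHomogeneous 4) (hF₂ : F₂.IsHomogeneous 4)
    (hzero : ∀ z w : AlgebraicClosure K,
      aeval ![z, w] F₁ = 0 → aeval ![z, w] F₂ = 0 → z = 0 ∧ w = 0)
    (F : K × K → K × K)
    (hF : ∀ X : K × K, F X = (eval ![X.1, X.2] F₁, eval ![X.1, X.2] F₂)) :
    ∃ G : K × K → ℝ,
      (∀ X : K × K, X ≠ 0 →
        Tendsto (fun n : ℕ => Real.log ‖F^[n] X‖ / 4 ^ n) atTop (nhds (G X))) ∧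
      (∃ C : ℝ, 0 ≤ C ∧ ∀ X : K × K, X ≠ 0 → |G X - Real.log ‖X‖| ≤ C) ∧
      ∀ α : K, α ≠ 0 → ∀ X : K × K, X ≠ 0 →
        G (α * X.1, α * X.2) = G X + Real.log ‖α‖ := by
  classical
  set p₁ : Polynomial K := MvPolynomial.aeval ![1, Polynomial.X] F₁ with hp₁
  set p₂ : Polynomial K := MvPolynomial.aeval ![1, Polynomial.X] F₂ with hp₂
  set q₁ : Polynomial K := MvPolynomial.aeval ![Polynomial.X, 1] F₁ with hq₁
  set q₂ : Polynomial K := MvPolynomial.aeval ![Polynomial.X, 1] F₂ with hq₂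
  have hmap1 : ∀ (P : MvPolynomial (Fin 2) K) (t : AlgebraicClosure K),
      Polynomial.aeval t (MvPolynomial.aeval ![1, (Polynomial.X : Polynomial K)] P)
        = MvPolynomial.aeval ![1, t] P := by
    intro P t
    have h := MvPolynomial.comp_aeval_apply (R := K)
      (f := ![1, (Polynomial.X : Polynomial K)]) (Polynomial.aeval t) P
    have hv : (fun i => (Polynomial.aeval t) (![1, (Polynomial.X : Polynomial K)] i))
        = ![(1 : AlgebraicClosure K), t] := by
      funext i; fin_cases i <;> simp
    rw [h, hv]
  have hmap2 : ∀ (P : MvPolynomial (Fin 2) K) (t : AlgebraicClosure K),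
      Polynomial.aeval t (MvPolynomial.aeval ![(Polynomial.X : Polynomial K), 1] P)
        = MvPolynomial.aeval ![t, 1] P := by
    intro P t
    have h := MvPolynomial.comp_aeval_apply (R := K)
      (f := ![(Polynomial.X : Polynomial K), 1]) (Polynomial.aeval t) P
    have hv : (fun i => (Polynomial.aeval t) (![(Polynomial.X : Polynomial K), 1] i))
        = ![t, (1 : AlgebraicClosure K)] := by
      funext i; fin_cases i <;> simp
    rw [h, hv]
  have hcop1 : IsCoprime p₁ p₂ := by
    refine coprime_of_no_common_root (L := AlgebraicClosure K) _ _ fun t h1 h2 => ?_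
    rw [hp₁, hmap1 F₁ t] at h1
    rw [hp₂, hmap1 F₂ t] at h2
    exact one_ne_zero (hzero 1 t h1 h2).1
  have hcop2 : IsCoprime q₁ q₂ := by
    refine coprime_of_no_common_root (L := AlgebraicClosure K) _ _ fun t h1 h2 => ?_
    rw [hq₁, hmap2 F₁ t] at h1
    rw [hq₂, hmap2 F₂ t] at h2
    exact one_ne_zero (hzero t 1 h1 h2).2
  obtain ⟨c₁', hc₁', hch1⟩ := chart_bound hcop1
  obtain ⟨c₂', hc₂', hch2⟩ := chart_bound hcop2
  obtain ⟨M₁, hM₁, hb₁⟩ := eval_bound p₁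
  obtain ⟨M₂, hM₂, hb₂⟩ := eval_bound p₂
  obtain ⟨N₁, hN₁, hb₃⟩ := eval_bound q₁
  obtain ⟨N₂, hN₂, hb₄⟩ := eval_bound q₂
  set clo : ℝ := min c₁' c₂' with hclo
  set chi : ℝ := max (max M₁ M₂) (max N₁ N₂) with hchi
  have hclo0 : 0 < clo := lt_min hc₁' hc₂'
  have hchi0 : 0 < chi := lt_of_lt_of_le hM₁ ((le_max_left _ _).trans (le_max_left _ _))
  have key1 : ∀ (P : MvPolynomial (Fin 2) K), P.IsHomogeneous 4 → ∀ z w : K, z ≠ 0 →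
      ‖eval ![z, w] P‖
        = ‖z‖ ^ 4 * ‖(MvPolynomial.aeval ![1, Polynomial.X] P).eval (w / z)‖ := by
    intro P hP z w hz
    have hv : ![z, w] = z • ![1, w / z] := by
      funext i; fin_cases i <;> simp [mul_div_cancel₀, hz]
    rw [hv, homog_eval_smul hP, norm_mul, norm_pow, aeval_eval]
    have hvec : (fun i => Polynomial.eval (w / z) (![1, Polynomial.X] i)) = ![1, w / z] := by
      funext i; fin_cases i <;> simp
    rw [hvec]
  have key2 : ∀ (P : MvPolynomial (Fin 2) K), P.IsHomogeneous 4 → ∀ z w : K, w ≠ 0 →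
      ‖eval ![z, w] P‖
        = ‖w‖ ^ 4 * ‖(MvPolynomial.aeval ![Polynomial.X, 1] P).eval (z / w)‖ := by
    intro P hP z w hw
    have hv : ![z, w] = w • ![z / w, 1] := by
      funext i; fin_cases i <;> simp [mul_div_cancel₀, hw]
    rw [hv, homog_eval_smul hP, norm_mul, norm_pow, aeval_eval]
    have hvec : (fun i => Polynomial.eval (z / w) (![Polynomial.X, 1] i)) = ![z / w, 1] := by
      funext i; fin_cases i <;> simp
    rw [hvec]
  have hest : ∀ X : K × K, X ≠ 0 →
      clo * ‖X‖ ^ 4 ≤ ‖F X‖ ∧ ‖F X‖ ≤ chi * ‖X‖ ^ 4 := by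
    intro X hX
    have hFX : ‖F X‖ = max ‖eval ![X.1, X.2] F₁‖ ‖eval ![X.1, X.2] F₂‖ := by
      rw [hF X, Prod.norm_def]
    rcases le_total ‖X.2‖ ‖X.1‖ with hle | hle
    · have hz : X.1 ≠ 0 := by
        intro h0
        apply hX
        have h1 : ‖X.2‖ ≤ 0 := by simpa [h0] using hle
        have h2 : X.2 = 0 := by simpa using le_antisymm h1 (norm_nonneg _)
        exact Prod.ext_iff.mpr ⟨h0, h2⟩
      have ht : ‖X.2 / X.1‖ ≤ 1 := by
        rw [norm_div]
        exact div_le_one_of_le₀ hle (norm_nonneg _)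
      have hXn : ‖X‖ = ‖X.1‖ := by rw [Prod.norm_def]; exact max_eq_left hle
      rw [hXn, hFX, key1 F₁ hF₁ X.1 X.2 hz, key1 F₂ hF₂ X.1 X.2 hz, ← hp₁, ← hp₂,
        ← mul_max_of_nonneg _ _ (by positivity : (0:ℝ) ≤ ‖X.1‖ ^ 4)]
      have hcl : clo ≤ max ‖p₁.eval (X.2 / X.1)‖ ‖p₂.eval (X.2 / X.1)‖ :=
        (min_le_left _ _).trans (hch1 _ ht)
      have hmaxle : max ‖p₁.eval (X.2 / X.1)‖ ‖p₂.eval (X.2 / X.1)‖ ≤ chi :=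
        max_le ((hb₁ _ ht).trans ((le_max_left M₁ M₂).trans (le_max_left _ _)))
          ((hb₂ _ ht).trans ((le_max_right M₁ M₂).trans (le_max_left _ _)))
      constructor
      · nlinarith [pow_nonneg (norm_nonneg X.1) 4]
      · nlinarith [pow_nonneg (norm_nonneg X.1) 4]
    · have hw : X.2 ≠ 0 := by
        intro h0
        apply hX
        have h1 : ‖X.1‖ ≤ 0 := by simpa [h0] using hle
        have h2 : X.1 = 0 := by simpa using le_antisymm h1 (norm_nonneg _)
        exact Prod.ext_iff.mpr ⟨h2, h0⟩
      have ht : ‖X.1 / X.2‖ ≤ 1 := by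
        rw [norm_div]
        exact div_le_one_of_le₀ hle (norm_nonneg _)
      have hXn : ‖X‖ = ‖X.2‖ := by rw [Prod.norm_def]; exact max_eq_right hle
      rw [hXn, hFX, key2 F₁ hF₁ X.1 X.2 hw, key2 F₂ hF₂ X.1 X.2 hw, ← hq₁, ← hq₂,
        ← mul_max_of_nonneg _ _ (by positivity : (0:ℝ) ≤ ‖X.2‖ ^ 4)]
      have hcl : clo ≤ max ‖q₁.eval (X.1 / X.2)‖ ‖q₂.eval (X.1 / X.2)‖ :=
        (min_le_right _ _).trans (hch2 _ ht)
      have hmaxle : max ‖q₁.eval (X.1 / X.2)‖ ‖q₂.eval (X.1 / X.2)‖ ≤ chi :=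
        max_le ((hb₃ _ ht).trans ((le_max_left N₁ N₂).trans (le_max_right _ _)))
          ((hb₄ _ ht).trans ((le_max_right N₁ N₂).trans (le_max_right _ _)))
      constructor
      · nlinarith [pow_nonneg (norm_nonneg X.2) 4]
      · nlinarith [pow_nonneg (norm_nonneg X.2) 4]
  -- basic consequences
  have hpos : ∀ X : K × K, X ≠ 0 → 0 < ‖F X‖ := by
    intro X hX
    have h1 : (0:ℝ) < ‖X‖ := norm_pos_iff.mpr hX
    exact lt_of_lt_of_le (by positivity) (hest X hX).1
  have hFne : ∀ X : K × K, X ≠ 0 → F X ≠ 0 := by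
    intro X hX h0
    have := hpos X hX
    rw [h0, norm_zero] at this
    exact lt_irrefl _ this
  have hiter : ∀ (X : K × K), X ≠ 0 → ∀ n, F^[n] X ≠ 0 := by
    intro X hX n
    induction n with
    | zero => simpa using hX
    | succ n ih => rw [Function.iterate_succ_apply']; exact hFne _ ih
  set C₀ : ℝ := max |Real.log clo| |Real.log chi| with hC₀
  have hC₀0 : 0 ≤ C₀ := le_trans (abs_nonneg _) (le_max_left _ _)
  have hstep : ∀ Y : K × K, Y ≠ 0 → |Real.log ‖F Y‖ - 4 * Real.log ‖Y‖| ≤ C₀ := by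
    intro Y hY
    have hY0 : (0:ℝ) < ‖Y‖ := norm_pos_iff.mpr hY
    obtain ⟨hl, hr⟩ := hest Y hY
    have hl' : Real.log clo + 4 * Real.log ‖Y‖ ≤ Real.log ‖F Y‖ := by
      calc Real.log clo + 4 * Real.log ‖Y‖ = Real.log (clo * ‖Y‖ ^ 4) := by
            rw [Real.log_mul (ne_of_gt hclo0) (by positivity), Real.log_pow]
            push_cast; ring
        _ ≤ Real.log ‖F Y‖ := Real.log_le_log (by positivity) hl
    have hr' : Real.log ‖F Y‖ ≤ Real.log chi + 4 * Real.log ‖Y‖ := by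
      calc Real.log ‖F Y‖ ≤ Real.log (chi * ‖Y‖ ^ 4) := Real.log_le_log (hpos Y hY) hr
        _ = Real.log chi + 4 * Real.log ‖Y‖ := by
            rw [Real.log_mul (ne_of_gt hchi0) (by positivity), Real.log_pow]
            push_cast; ring
    rw [abs_le]
    constructor
    · have h2 : -C₀ ≤ -|Real.log clo| := neg_le_neg (le_max_left _ _)
      have h3 : -|Real.log clo| ≤ Real.log clo := neg_abs_le _
      linarith
    · have h2 : Real.log chi ≤ |Real.log chi| := le_abs_self _
      have h3 : |Real.log chi| ≤ C₀ := le_max_right _ _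
      linarith
  have hdist : ∀ X : K × K, X ≠ 0 → ∀ n : ℕ,
      dist (Real.log ‖F^[n] X‖ / 4 ^ n) (Real.log ‖F^[n+1] X‖ / 4 ^ (n+1))
        ≤ (C₀ / 4) * (1 / 4 : ℝ) ^ n := by
    intro X hX n
    have h4 : ((4:ℝ) ^ (n+1)) ≠ 0 := by positivity
    have h1 : Real.log ‖F^[n+1] X‖ / 4 ^ (n+1) - Real.log ‖F^[n] X‖ / 4 ^ n
        = (Real.log ‖F (F^[n] X)‖ - 4 * Real.log ‖F^[n] X‖) / 4 ^ (n+1) := by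
      rw [Function.iterate_succ_apply']
      field_simp
      ring
    have h2 : (C₀ / 4) * (1 / 4 : ℝ) ^ n = C₀ / 4 ^ (n+1) := by
      rw [div_pow, one_pow, pow_succ]
      ring
    rw [dist_comm, Real.dist_eq, h1, abs_div,
      abs_of_pos (by positivity : (0:ℝ) < 4 ^ (n+1)), h2]
    gcongr
    all_goals first
      | exact Or.inl trivial
      | exact hstep _ (hiter X hX n)
  have hlim : ∀ X : K × K, X ≠ 0 →
      ∃ l : ℝ, Tendsto (fun n : ℕ => Real.log ‖F^[n] X‖ / 4 ^ n) atTop (nhds l) := by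
    intro X hX
    have hc : CauchySeq (fun n : ℕ => Real.log ‖F^[n] X‖ / 4 ^ n) :=
      cauchySeq_of_le_geometric (1/4) (C₀/4) (by norm_num) (hdist X hX)
    exact cauchySeq_tendsto_of_complete hc
  choose G' hG' using hlim
  refine ⟨fun X => if h : X = 0 then 0 else G' X h, ?_, ?_, ?_⟩
  · intro X hX
    dsimp only
    rw [dif_neg hX]
    exact hG' X hX
  · refine ⟨C₀, hC₀0, fun X hX => ?_⟩
    have hd := dist_le_of_le_geometric_of_tendsto₀ (1/4) (C₀/4) (by norm_num)
      (hdist X hX) (hG' X hX)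
    have h0 : Real.log ‖F^[0] X‖ / (4:ℝ) ^ 0 = Real.log ‖X‖ := by simp
    dsimp only
    rw [dif_neg hX, abs_sub_comm, ← Real.dist_eq]
    calc dist (Real.log ‖X‖) (G' X hX)
        = dist (Real.log ‖F^[0] X‖ / (4:ℝ) ^ 0) (G' X hX) := by rw [h0]
      _ ≤ (C₀/4) / (1 - 1/4) := hd
      _ ≤ C₀ := by
          have : (C₀/4) / (1 - 1/4 : ℝ) = C₀ / 3 := by ring
          linarith
  · intro α hα X hX
    have hFsc : ∀ (β : K) (Y : K × K),
        F (β * Y.1, β * Y.2) = (β ^ 4 * (F Y).1, β ^ 4 * (F Y).2) := by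
      intro β Y
      rw [hF Y, hF (β * Y.1, β * Y.2)]
      have hv : ![(β * Y.1, β * Y.2).1, (β * Y.1, β * Y.2).2] = β • ![Y.1, Y.2] := by
        funext i; fin_cases i <;> simp
      rw [hv, homog_eval_smul hF₁ β, homog_eval_smul hF₂ β]
    have hIter : ∀ (n : ℕ),
        F^[n] (α * X.1, α * X.2) = (α ^ 4 ^ n * (F^[n] X).1, α ^ 4 ^ n * (F^[n] X).2) := by
      intro n
      induction n with
      | zero => simp
      | succ n ih =>
        rw [Function.iterate_succ_apply', Function.iterate_succ_apply', ih, hFsc]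
        rw [← pow_mul, ← pow_succ]
    have hne : (α * X.1, α * X.2) ≠ (0 : K × K) := by
      intro h0
      apply hX
      rw [Prod.ext_iff] at h0 ⊢
      simp only [Prod.fst_zero, Prod.snd_zero] at h0 ⊢
      obtain ⟨h1, h2⟩ := h0
      exact ⟨by rcases mul_eq_zero.mp h1 with h | h; exact absurd h hα; exact h,
        by rcases mul_eq_zero.mp h2 with h | h; exact absurd h hα; exact h⟩
    have hna : ∀ n : ℕ, Real.log ‖F^[n] (α * X.1, α * X.2)‖ / 4 ^ n
        = Real.log ‖α‖ + Real.log ‖F^[n] X‖ / 4 ^ n := by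
      intro n
      rw [hIter n]
      have hFn : (0:ℝ) < ‖F^[n] X‖ := norm_pos_iff.mpr (hiter X hX n)
      have hα' : (0:ℝ) < ‖α‖ := norm_pos_iff.mpr hα
      have h1 : ‖(α ^ 4 ^ n * (F^[n] X).1, α ^ 4 ^ n * (F^[n] X).2)‖
          = ‖α‖ ^ 4 ^ n * ‖F^[n] X‖ := by
        rw [Prod.norm_def, Prod.norm_def, norm_mul, norm_mul, norm_pow,
          mul_max_of_nonneg _ _ (by positivity : (0:ℝ) ≤ ‖α‖ ^ 4 ^ n)]
      rw [h1, Real.log_mul (by positivity) (ne_of_gt hFn), Real.log_pow]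
      have h4 : ((4:ℝ) ^ n) ≠ 0 := by positivity
      field_simp
      push_cast
      ring
    have t2 : Tendsto (fun n : ℕ => Real.log ‖F^[n] (α * X.1, α * X.2)‖ / 4 ^ n)
        atTop (nhds (Real.log ‖α‖ + G' X hX)) := by
      simp only [hna]
      exact (hG' X hX).const_add _
    have t1 := hG' _ hne
    have := tendsto_nhds_unique t1 t2
    dsimp only
    rw [dif_neg hne, dif_neg hX, this]
    ring
end
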